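/- Let R be a Noetherian local ring, C a semidualizing R-module, and M, N finitely generated R-modules with both Hom_R(M,N) and N in the Auslander class A_C(R). Then the natural map Φ: C ⊗_R Hom_R(M,N) → Hom_R(M, C ⊗_R N), sending c ⊗ φ to the map m ↦ c ⊗ φ(m), is an isomorphism. -/

import Mathlib

open CategoryTheory Opposite

universe u

noncomputable section

/-- The Ext module `Ext^i_R(M,N)`. -/
def ExtMod (R : Type u) [CommRing R] (M N : ModuleCat.{u} R) (i : ℕ) : ModuleCat.{u} R :=
  ((Ext R (ModuleCat.{u} R) i).obj (op M)).obj N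

/-- The Tor module `Tor_i^R(M,N)`. -/
def TorMod (R : Type u) [CommRing R] (M N : ModuleCat.{u} R) (i : ℕ) : ModuleCat.{u} R :=
  ((Tor (ModuleCat.{u} R) i).obj M).obj N

/-- The depth of a module over a local ring, as the least `i` with
`Ext^i(k, M) ≠ 0`. -/
def moduleDepth (R : Type u) [CommRing R] [IsLocalRing R] (M : ModuleCat.{u} R) : ℕ∞ :=
  sInf {i : ℕ∞ | ∃ n : ℕ, i = n ∧
    Nontrivial (ExtMod R (ModuleCat.of R (IsLocalRing.ResidueField R)) M n)}

/-- A Cohen-Macaulay local ring of dimension `d`. -/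
def IsCMLocalOfDim (R : Type u) [CommRing R] [IsLocalRing R] [IsNoetherianRing R] (d : ℕ) : Prop :=
  ringKrullDim R = d ∧ moduleDepth R (ModuleCat.of R R) = d

/-- Totally reflexive modules. -/
def TotallyReflexive (R : Type u) [CommRing R] (M : Type u) [AddCommGroup M] [Module R M] : Prop :=
  Function.Bijective (Module.Dual.eval R M) ∧
  ∀ i : ℕ, 1 ≤ i →
    Subsingleton (ExtMod R (ModuleCat.of R M) (ModuleCat.of R R) i) ∧
    Subsingleton (ExtMod R (ModuleCat.of R (Module.Dual R M)) (ModuleCat.of R R) i)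

/-- `GdimLE R n M` : the Gorenstein dimension of `M` is at most `n`. -/
def GdimLE (R : Type u) [CommRing R] : ℕ → ModuleCat.{u} R → Prop
  | 0, M => TotallyReflexive R M
  | (n+1), M => ∃ (G : ModuleCat.{u} R) (g : G →ₗ[R] M), Module.Finite R G ∧
      TotallyReflexive R G ∧ Function.Surjective g ∧
      GdimLE R n (ModuleCat.of R (LinearMap.ker g))

/-- Finite Gorenstein dimension. -/
def FiniteGdim (R : Type u) [CommRing R] (M : Type u) [AddCommGroup M] [Module R M] : Prop :=
  ∃ n, GdimLE R n (ModuleCat.of R M)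

/-- `PdLE R n M` : the projective dimension of `M` is at most `n`. -/
def PdLE (R : Type u) [CommRing R] : ℕ → ModuleCat.{u} R → Prop
  | 0, M => Module.Projective R M
  | (n+1), M => ∃ (G : ModuleCat.{u} R) (g : G →ₗ[R] M), Module.Projective R G ∧
      Function.Surjective g ∧ PdLE R n (ModuleCat.of R (LinearMap.ker g))

/-- Finite projective dimension. -/
def FinitePd (R : Type u) [CommRing R] (M : Type u) [AddCommGroup M] [Module R M] : Prop :=
  ∃ n, PdLE R n (ModuleCat.of R M)

/-- A semidualizing module. -/
def Semidualizing (R : Type u) [CommRing R] (C : Type u) [AddCommGroup C] [Module R C] : Prop :=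
  Module.Finite R C ∧
  Function.Bijective (LinearMap.toSpanSingleton R (C →ₗ[R] C) LinearMap.id) ∧
  ∀ i : ℕ, 1 ≤ i → Subsingleton (ExtMod R (ModuleCat.of R C) (ModuleCat.of R C) i)

/-- Membership in the Auslander class with respect to `C`. -/
def InAuslanderClass (R : Type u) [CommRing R] (C : Type u) [AddCommGroup C] [Module R C]
    (X : Type u) [AddCommGroup X] [Module R X] : Prop :=
  Function.Bijective ((TensorProduct.mk R C X).flip) ∧
  (∀ i : ℕ, 1 ≤ i → Subsingleton (TorMod R (ModuleCat.of R C) (ModuleCat.of R X) i)) ∧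
  (∀ i : ℕ, 1 ≤ i →
    Subsingleton (ExtMod R (ModuleCat.of R C) (ModuleCat.of R (TensorProduct R C X)) i))

/-- Height of a prime ideal. -/
def primeHt (R : Type u) [CommRing R] (p : Ideal R) (hp : p.IsPrime) : ℕ∞ :=
  Order.height (⟨p, hp⟩ : PrimeSpectrum R)

/-- Finite injective dimension, via vanishing of `Ext` in high degrees. -/
def FiniteInjDim (R : Type u) [CommRing R] (M : Type u) [AddCommGroup M] [Module R M] : Prop :=
  ∃ n : ℕ, ∀ (N : ModuleCat.{u} R) (i : ℕ), n < i →
    Subsingleton (ExtMod R N (ModuleCat.of R M) i)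

/-- A canonical (dualizing) module over a Cohen-Macaulay local ring:
a semidualizing module of finite injective dimension. -/
def IsCanonicalModule (R : Type u) [CommRing R] (w : Type u) [AddCommGroup w] [Module R w] : Prop :=
  Semidualizing R w ∧ FiniteInjDim R w

end

section AuxLemmas
open CategoryTheory Opposite TensorProduct
set_option maxHeartbeats 1000000
set_option synthInstance.maxHeartbeats 400000

theorem exists_nonzero_hom {R : Type u} [CommRing R] [IsNoetherianRing R]
    (C X : Type u) [AddCommGroup C] [Module R C] [AddCommGroup X] [Module R X]
    [Module.Finite R C] [Module.Finite R X] [Nontrivial X]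
    (hfaith : ∀ r : R, (∀ c : C, r • c = 0) → r = 0) :
    ∃ f : C →ₗ[R] X, f ≠ 0 := by
  classical
  obtain ⟨p, hp⟩ := associatedPrimes.nonempty R X
  obtain ⟨hp1, x, hpx⟩ := isAssociatedPrime_iff.1 hp
  haveI := hp1
  let D : Type u := R ⧸ p
  let T : Type u := D ⊗[R] C
  let F : Type u := FractionRing D
  -- T = (R/p) ⊗ C over D = R/p
  have hnt : ∃ t : T, ∀ d : R ⧸ p, d • t = 0 → d = 0 := by
    by_contra hcon
    push_neg at hcon
    obtain ⟨s, hs⟩ := Module.finite_def.mp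
      (inferInstance : Module.Finite (R ⧸ p) (T))
    choose dfun hd0 hdne using hcon
    let d : R ⧸ p := ∏ t ∈ s.attach, dfun t
    have hdne' : d ≠ 0 := Finset.prod_ne_zero_iff.2 fun t _ => hdne t
    have hdall : ∀ t : T, d • t = 0 := by
      intro t
      have ht : t ∈ Submodule.span (R ⧸ p) (s : Set (T)) := by
        rw [hs]; trivial
      induction ht using Submodule.span_induction with
      | mem y hy =>
          have hy' : y ∈ s := hy
          obtain ⟨c, hc⟩ := Finset.dvd_prod_of_mem (fun t : {z // z ∈ s} => dfun ↑t)
            (Finset.mem_attach s ⟨y, hy'⟩)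
          have hd : d = dfun y * c := hc
          rw [hd, mul_comm, mul_smul, hd0, smul_zero]
      | zero => simp
      | add a b _ _ ha hb => rw [smul_add, ha, hb, add_zero]
      | smul a t _ ht => rw [smul_comm, ht, smul_zero]
    obtain ⟨r, hr⟩ := Ideal.Quotient.mk_surjective d
    have hrp : r ∉ p := by
      intro hmem
      exact hdne' (by rw [← hr, Ideal.Quotient.eq_zero_iff_mem.2 hmem])
    have hsc : ∀ c : C, r • c ∈ (p • (⊤ : Submodule R C)) := by
      intro c
      have h0 : (Ideal.Quotient.mk p r) ⊗ₜ[R] c = (0 : T) := by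
        have := hdall ((1 : R ⧸ p) ⊗ₜ[R] c)
        rwa [show d • ((1 : R ⧸ p) ⊗ₜ[R] c) = (Ideal.Quotient.mk p r) ⊗ₜ[R] c by
          rw [smul_tmul', smul_eq_mul, mul_one, hr]] at this
      have := congrArg (quotTensorEquivQuotSMul C p) h0
      rw [quotTensorEquivQuotSMul_mk_tmul, map_zero] at this
      exact (Submodule.Quotient.mk_eq_zero _).1 this
    obtain ⟨q, hqm, -, hqc, hq0⟩ :=
      LinearMap.exists_monic_and_coeff_mem_pow_and_aeval_eq_zero_of_range_le_smul R
        (r • (1 : Module.End R C)) p (by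
          rintro _ ⟨c, rfl⟩
          simpa using hsc c)
    have heval : Polynomial.eval r q = 0 := by
      apply hfaith
      intro c
      have h1 : Polynomial.aeval (r • (1 : Module.End R C)) q c = 0 := by rw [hq0]; rfl
      rw [show r • (1 : Module.End R C) = algebraMap R (Module.End R C) r by
            ext m; simp [Module.algebraMap_end_apply],
          Polynomial.aeval_algebraMap_apply] at h1
      rw [show ((Polynomial.aeval r) q : R) = Polynomial.eval r q by
            rw [Polynomial.coe_aeval_eq_eval]] at h1
      simpa [Module.algebraMap_end_apply] using h1
    have hpow : r ^ q.natDegree ∈ p := by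
      have hsum := Polynomial.eval_eq_sum_range (x := r) (p := q)
      rw [heval, Finset.sum_range_succ, hqm.coeff_natDegree, one_mul] at hsum
      have heq2 : r ^ q.natDegree
          = -∑ i ∈ Finset.range q.natDegree, q.coeff i * r ^ i := by
        linear_combination -hsum
      rw [heq2]
      refine Submodule.neg_mem _ (Ideal.sum_mem _ fun i hi => Ideal.mul_mem_right _ _ ?_)
      have : q.coeff i ∈ p ^ (q.natDegree - i) := hqc i
      exact Ideal.pow_le_self (Nat.sub_ne_zero_of_lt (Finset.mem_range.1 hi)) this
    exact hrp (hp1.mem_of_pow_mem _ hpow)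
  obtain ⟨t₀, ht₀⟩ := hnt
  -- 1 ⊗ t₀ ≠ 0 in F ⊗[D] T
  have hW0 : (1 : F) ⊗ₜ[D] t₀ ≠ (0 : F ⊗[D] T) := by
    intro hzero
    have hι : Function.Injective (LinearMap.toSpanSingleton D T t₀) := by
      rw [← LinearMap.ker_eq_bot, LinearMap.ker_eq_bot']
      intro dd hdd
      rw [LinearMap.toSpanSingleton_apply] at hdd
      exact ht₀ dd hdd
    have hinj := Module.Flat.lTensor_preserves_injective_linearMap (M := F)
      (LinearMap.toSpanSingleton D T t₀) hι
    have h1 : (LinearMap.toSpanSingleton D T t₀).lTensor F ((1 : F) ⊗ₜ[D] (1 : D))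
        = (1 : F) ⊗ₜ[D] t₀ := by
      simp [LinearMap.toSpanSingleton_apply]
    have h0 : ((1 : F) ⊗ₜ[D] (1 : D)) = (0 : F ⊗[D] D) := by
      apply hinj
      rw [h1, hzero, map_zero]
    have := congrArg (TensorProduct.rid D F) h0
    simpa using this
  -- nonzero functional
  obtain ⟨φ, hφ⟩ : ∃ φ : Module.Dual F (F ⊗[D] T), φ ((1 : F) ⊗ₜ[D] t₀) ≠ 0 := by
    by_contra hcon
    push_neg at hcon
    exact hW0 ((Module.forall_dual_apply_eq_zero_iff F _).1 hcon)
  let lam : T →ₗ[D] F := (φ.restrictScalars D) ∘ₗ (TensorProduct.mk D F T 1)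
  have hlam : lam t₀ ≠ 0 := hφ
  -- clear denominators
  obtain ⟨sT, hsT⟩ := Module.finite_def.mp (inferInstance : Module.Finite D T)
  obtain ⟨b, hb⟩ := IsLocalization.exist_integer_multiples_of_finset
    (nonZeroDivisors D) (sT.image lam)
  let lam2 : T →ₗ[D] F := (LinearMap.lsmul D F (b : D)) ∘ₗ lam
  have hlam2def : ∀ t : T, lam2 t = algebraMap D F (b : D) * lam t :=
    fun t => Algebra.smul_def (b : D) (lam t)
  have hrange : ∀ t : T, lam2 t ∈ LinearMap.range (Algebra.linearMap D F) := by
    intro t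
    have ht : t ∈ Submodule.span D (sT : Set T) := by rw [hsT]; trivial
    induction ht using Submodule.span_induction with
    | mem y hy =>
        obtain ⟨dd, hdd⟩ := hb (lam y) (Finset.mem_image_of_mem lam hy)
        refine ⟨dd, ?_⟩
        show algebraMap D F dd = lam2 y
        rw [hdd, Algebra.smul_def]
        exact (hlam2def y).symm
    | zero => simp
    | add a c _ _ ha hc => rw [map_add]; exact Submodule.add_mem _ ha hc
    | smul a t _ ht' => rw [map_smul]; exact Submodule.smul_mem _ _ ht'
  have hbne : algebraMap D F (b : D) ≠ 0 := by
    intro h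
    exact nonZeroDivisors.coe_ne_zero b ((IsFractionRing.to_map_eq_zero_iff (K := F)).1 h)
  have hlam2 : lam2 t₀ ≠ 0 := by
    rw [hlam2def t₀]
    exact mul_ne_zero hbne hlam
  let eA := LinearEquiv.ofInjective (Algebra.linearMap D F)
    (IsFractionRing.injective D F)
  let ν : T →ₗ[D] D := eA.symm.toLinearMap ∘ₗ
    LinearMap.codRestrict (LinearMap.range (Algebra.linearMap D F)) lam2 hrange
  have hν : ∀ t : T, algebraMap D F (ν t) = lam2 t := by
    intro t
    show (Algebra.linearMap D F) (eA.symm ⟨lam2 t, hrange t⟩) = lam2 t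
    have : ∀ z : LinearMap.range (Algebra.linearMap D F),
        (Algebra.linearMap D F) (eA.symm z) = (z : F) := by
      intro z
      conv_rhs => rw [← eA.apply_symm_apply z]
      rfl
    rw [this]
  -- choose c with ν (1 ⊗ c) ≠ 0
  have hc : ∃ c : C, ν ((1 : D) ⊗ₜ[R] c) ≠ 0 := by
    by_contra hcon
    push_neg at hcon
    have hν0 : ∀ t : T, ν t = 0 := by
      intro t
      induction t using TensorProduct.induction_on with
      | zero => simp
      | tmul d c =>
          have : d ⊗ₜ[R] c = d • ((1 : D) ⊗ₜ[R] c) := by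
            rw [smul_tmul', smul_eq_mul, mul_one]
          rw [this, map_smul, hcon c, smul_zero]
      | add a c ha hc' => rw [map_add, ha, hc', add_zero]
    have : lam2 t₀ = 0 := by rw [← hν t₀, hν0, map_zero]
    exact hlam2 this
  obtain ⟨c₀, hc₀⟩ := hc
  -- the injection R/p → X
  let g0 : R →ₗ[R] X := LinearMap.toSpanSingleton R X x
  have hkerg0 : LinearMap.ker g0 = p := by
    ext r
    rw [LinearMap.mem_ker, LinearMap.toSpanSingleton_apply, hpx,
      Submodule.mem_colon_singleton, Submodule.mem_bot]
  let g2 : D →ₗ[R] X := Submodule.liftQ p g0 (le_of_eq hkerg0.symm)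
  have hg2 : Function.Injective g2 := by
    rw [← LinearMap.ker_eq_bot]
    exact Submodule.ker_liftQ_eq_bot p g0 _ (le_of_eq hkerg0)
  refine ⟨g2 ∘ₗ (ν.restrictScalars R) ∘ₗ ((TensorProduct.mk R D C) 1), ?_⟩
  intro hzero
  apply hc₀
  have : g2 (ν ((1 : D) ⊗ₜ[R] c₀)) = 0 := by
    have := congrArg (fun f : C →ₗ[R] X => f c₀) hzero
    simp at this; exact this
  exact hg2 (by rw [this, map_zero])


theorem extLift {R : Type u} [CommRing R] {Cm U V W : Type u} [AddCommGroup Cm] [Module R Cm]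
    [AddCommGroup U] [Module R U] [AddCommGroup V] [Module R V] [AddCommGroup W] [Module R W]
    (f : U →ₗ[R] V) (g : V →ₗ[R] W) (hf : Function.Injective f) (hg : Function.Surjective g)
    (hker : LinearMap.ker g = LinearMap.range f)
    (hext : Subsingleton (((Ext R (ModuleCat.{u} R) 1).obj (op (ModuleCat.of R Cm))).obj
      (ModuleCat.of R U)))
    (h : Cm →ₗ[R] W) : ∃ h' : Cm →ₗ[R] V, g ∘ₗ h' = h := by
  classical
  set Cobj := ModuleCat.of R Cm with hCobj
  let P : ProjectiveResolution Cobj := (HasProjectiveResolution.out (Z := Cobj)).some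
  set Uobj := ModuleCat.of R U with hUobj
  haveI := hext
  let Kc := P.complex.linearYonedaObj R Uobj
  -- exactness of the Hom complex at degree 1
  haveI hsub : Subsingleton (Kc.homology 1) :=
    Equiv.subsingleton ((P.isoExt (R := R) 1 Uobj).toLinearEquiv.toEquiv.symm)
  have hexact : Kc.ExactAt 1 :=
    (Kc.exactAt_iff_isZero_homology 1).2 (ModuleCat.isZero_of_subsingleton _)
  have hex2 : (Kc.sc' 0 1 2).Exact :=
    (Kc.exactAt_iff' 0 1 2 (by simp) (by simp)).1 hexact
  -- morphisms
  let fm : Uobj ⟶ ModuleCat.of R V := ModuleCat.ofHom f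
  let gm : ModuleCat.of R V ⟶ ModuleCat.of R W := ModuleCat.ofHom g
  haveI : Epi gm := (ModuleCat.epi_iff_surjective (f := gm)).2 hg
  haveI : Mono fm := (ModuleCat.mono_iff_injective (f := fm)).2 hf
  let hm : Cobj ⟶ ModuleCat.of R W := ModuleCat.ofHom h
  let q : P.complex.X 0 ⟶ Cobj := P.π.f 0
  have hq : Function.Surjective q := by
    have : Epi (P.π.f 0) := inferInstance
    exact (ModuleCat.epi_iff_surjective (f := q)).1 this
  let d1 : P.complex.X 1 ⟶ P.complex.X 0 := P.complex.d 1 0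
  let d2 : P.complex.X 2 ⟶ P.complex.X 1 := P.complex.d 2 1
  have hd1q : d1 ≫ q = 0 := P.complex_d_comp_π_f_zero
  let k : P.complex.X 0 ⟶ ModuleCat.of R V := Projective.factorThru (q ≫ hm) gm
  have hk : k ≫ gm = q ≫ hm := Projective.factorThru_comp _ _
  have himg : ∀ y : P.complex.X 1, (d1 ≫ k) y ∈ LinearMap.range f := by
    intro y
    rw [← hker, LinearMap.mem_ker]
    have : ((d1 ≫ k) ≫ gm) y = 0 := by
      rw [Category.assoc, hk, ← Category.assoc, hd1q, Limits.zero_comp]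
      rfl
    exact this
  let e := LinearEquiv.ofInjective f hf
  let u : P.complex.X 1 ⟶ Uobj :=
    ModuleCat.ofHom (e.symm.toLinearMap ∘ₗ LinearMap.codRestrict (LinearMap.range f)
      ((d1 ≫ k).hom : (P.complex.X 1 : Type u) →ₗ[R] V) himg : (P.complex.X 1 : Type u) →ₗ[R] U)
  have hu : u ≫ fm = d1 ≫ k := by
    apply ModuleCat.hom_ext; apply LinearMap.ext; intro y
    show f (e.symm _) = _
    have : ∀ z : LinearMap.range f, f (e.symm z) = (z : V) := by
      intro z
      conv_rhs => rw [← e.apply_symm_apply z]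
      rfl
    rw [this]
    rfl
  have hcoc : Kc.d 1 2 u = 0 := by
    have h2 : d2 ≫ u = 0 := by
      rw [← cancel_mono fm, Category.assoc, hu, ← Category.assoc]
      show (P.complex.d 2 1 ≫ P.complex.d 1 0) ≫ k = 0 ≫ fm
      rw [P.complex.d_comp_d, Limits.zero_comp, Limits.zero_comp]
    show (P.complex.linearYonedaObj R Uobj).d 1 2 u = 0
    have : (P.complex.linearYonedaObj R Uobj).d 1 2 u = d2 ≫ u := by
      simp [ChainComplex.linearYonedaObj]; rfl
    rw [this, h2]; rfl
  obtain ⟨(v : P.complex.X 0 ⟶ Uobj), hv⟩ := (ShortComplex.moduleCat_exact_iff _).1 hex2 u (by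
    show (Kc.sc' 0 1 2).g u = 0
    exact hcoc)
  have hv' : d1 ≫ v = u := hv
  let θ : P.complex.X 0 ⟶ ModuleCat.of R V := k - (v ≫ fm)
  have hθd : d1 ≫ θ = 0 := by
    rw [Preadditive.comp_sub, ← Category.assoc, hv', hu, sub_self]
  have hθg : θ ≫ gm = q ≫ hm := by
    rw [Preadditive.sub_comp, Category.assoc, hk]
    have : fm ≫ gm = 0 := by
      apply ModuleCat.hom_ext; apply LinearMap.ext; intro x
      show g (f x) = 0
      have : f x ∈ LinearMap.ker g := by rw [hker]; exact ⟨x, rfl⟩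
      exact this
    rw [this, Limits.comp_zero, sub_zero]
  -- descend θ through q
  let qL : (P.complex.X 0 : Type u) →ₗ[R] Cm := q.hom
  let θL : (P.complex.X 0 : Type u) →ₗ[R] V := θ.hom
  have hkerθ : LinearMap.ker qL ≤ LinearMap.ker θL := by
    intro y hy
    have hy0 : P.π.f 0 y = 0 := hy
    obtain ⟨z, hz⟩ := (ShortComplex.moduleCat_exact_iff _).1 P.exact₀ y hy0
    have : θL (d1 z) = (d1 ≫ θ) z := rfl
    rw [LinearMap.mem_ker, ← hz, this, hθd]
    rfl
  let eq := LinearMap.quotKerEquivOfSurjective qL hq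
  have heq : ∀ y, eq (Submodule.Quotient.mk y) = qL y := fun y => rfl
  refine ⟨(Submodule.liftQ (LinearMap.ker qL) θL hkerθ) ∘ₗ eq.symm.toLinearMap, ?_⟩
  apply LinearMap.ext; intro c
  obtain ⟨y, rfl⟩ := hq c
  have h1 : eq.symm (qL y) = Submodule.Quotient.mk y := by
    rw [← heq y, eq.symm_apply_apply]
  show g ((Submodule.liftQ (LinearMap.ker qL) θL hkerθ) (eq.symm (qL y))) = h (qL y)
  rw [h1, Submodule.liftQ_apply]
  show (θ ≫ gm) y = (q ≫ hm) y
  rw [hθg]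


end AuxLemmas

section MainTheorem
open TensorProduct
set_option maxHeartbeats 1000000

theorem stmt1 (R : Type u) [CommRing R] [IsLocalRing R] [IsNoetherianRing R]
    (C M N : Type u) [AddCommGroup C] [Module R C] [AddCommGroup M] [Module R M]
    [AddCommGroup N] [Module R N] [Module.Finite R M] [Module.Finite R N]
    (hC : Semidualizing R C)
    (h1 : InAuslanderClass R C (M →ₗ[R] N)) (h2 : InAuslanderClass R C N) :
    Function.Bijective (TensorProduct.lTensorHomToHomLTensor (σ₁₂ := RingHom.id R) (P := M) (M₂ := C) (N₂ := N)) := by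
  classical
  obtain ⟨hCfin, hCunit, hCext⟩ := hC
  obtain ⟨h1u, h1tor, h1ext⟩ := h1
  obtain ⟨h2u, h2tor, h2ext⟩ := h2
  haveI : Module.Finite R C := hCfin
  have hfaith : ∀ r : R, (∀ c : C, r • c = 0) → r = 0 := by
    intro r hr
    have h0 : LinearMap.toSpanSingleton R (C →ₗ[R] C) LinearMap.id r
        = LinearMap.toSpanSingleton R (C →ₗ[R] C) LinearMap.id 0 := by
      rw [map_zero, LinearMap.toSpanSingleton_apply]
      exact LinearMap.ext fun c => hr c
    exact hCunit.1 h0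
  set Φ := TensorProduct.lTensorHomToHomLTensor (σ₁₂ := RingHom.id R) (P := M) (M₂ := C) (N₂ := N) with hΦdef
  let βe : N ≃ₗ[R] (C →ₗ[R] C ⊗[R] N) := LinearEquiv.ofBijective _ h2u
  let αe : (M →ₗ[R] N) ≃ₗ[R] (C →ₗ[R] C ⊗[R] (M →ₗ[R] N)) := LinearEquiv.ofBijective _ h1u
  have hβapp : ∀ (n : N) (c : C), βe n c = c ⊗ₜ[R] n := fun n c => rfl
  -- Step I: composition with Φ is bijective on Hom(C, -)
  have hsurj : ∀ ξ : C →ₗ[R] (M →ₗ[R] C ⊗[R] N),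
      ∃ ψ : C →ₗ[R] C ⊗[R] (M →ₗ[R] N), Φ ∘ₗ ψ = ξ := by
    intro ξ
    set f : M →ₗ[R] N := βe.symm.toLinearMap ∘ₗ ξ.flip with hfdef
    refine ⟨(TensorProduct.mk R C (M →ₗ[R] N)).flip f, ?_⟩
    apply LinearMap.ext; intro c; apply LinearMap.ext; intro m
    show Φ (c ⊗ₜ[R] f) m = ξ c m
    rw [TensorProduct.lTensorHomToHomLTensor_apply]
    have h3 : βe (f m) = ξ.flip m := by
      rw [hfdef]
      exact βe.apply_symm_apply (ξ.flip m)
    have h4 := congrArg (fun (g : C →ₗ[R] C ⊗[R] N) => g c) h3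
    exact h4
  have hinj : ∀ ψ₁ ψ₂ : C →ₗ[R] C ⊗[R] (M →ₗ[R] N), Φ ∘ₗ ψ₁ = Φ ∘ₗ ψ₂ → ψ₁ = ψ₂ := by
    intro ψ₁ ψ₂ hcomp
    obtain ⟨f₁, hf₁⟩ := αe.surjective ψ₁
    obtain ⟨f₂, hf₂⟩ := αe.surjective ψ₂
    rw [← hf₁, ← hf₂]
    suffices hff : f₁ = f₂ by rw [hff]
    apply LinearMap.ext; intro m
    apply βe.injective
    apply LinearMap.ext; intro c
    have h5 := congrArg (fun (g : C →ₗ[R] M →ₗ[R] C ⊗[R] N) => g c m) hcomp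
    simp only [LinearMap.comp_apply] at h5
    rw [← hf₁, ← hf₂] at h5
    have e1 : Φ (αe f₁ c) m = c ⊗ₜ[R] f₁ m := by
      show Φ (c ⊗ₜ[R] f₁) m = _
      rw [TensorProduct.lTensorHomToHomLTensor_apply]
    have e2 : Φ (αe f₂ c) m = c ⊗ₜ[R] f₂ m := by
      show Φ (c ⊗ₜ[R] f₂) m = _
      rw [TensorProduct.lTensorHomToHomLTensor_apply]
    rw [hβapp, hβapp, ← e1, ← e2]
    exact h5
  -- Step II : injectivity of Φ
  have hΦinj : Function.Injective Φ := by
    rw [← LinearMap.ker_eq_bot]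
    by_contra hne
    haveI : Nontrivial ↥(LinearMap.ker Φ) := Submodule.nontrivial_iff_ne_bot.2 hne
    haveI : Module.Finite R ↥(LinearMap.ker Φ) :=
      Module.finite_def.mpr (IsNoetherian.noetherian ⊤)
    obtain ⟨f, hf⟩ := exists_nonzero_hom C ↥(LinearMap.ker Φ) hfaith
    have hz : Φ ∘ₗ ((LinearMap.ker Φ).subtype ∘ₗ f) = Φ ∘ₗ (0 : C →ₗ[R] C ⊗[R] (M →ₗ[R] N)) := by
      apply LinearMap.ext; intro c
      simp only [LinearMap.comp_apply, LinearMap.zero_apply, map_zero, Submodule.coe_subtype]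
      exact (f c).2
    have h6 := hinj _ _ hz
    apply hf
    apply LinearMap.ext; intro c
    have h7 := congrArg (fun g : C →ₗ[R] C ⊗[R] (M →ₗ[R] N) => g c) h6
    simp only [LinearMap.comp_apply, LinearMap.zero_apply, Submodule.coe_subtype] at h7
    exact Subtype.ext h7
  refine ⟨hΦinj, ?_⟩
  -- Step III : surjectivity of Φ
  rw [← LinearMap.range_eq_top]
  by_contra hne
  haveI : Nontrivial ((M →ₗ[R] C ⊗[R] N) ⧸ LinearMap.range Φ) :=
    Submodule.Quotient.nontrivial_iff.mpr hne
  haveI : Module.Finite R ((M →ₗ[R] C ⊗[R] N) ⧸ LinearMap.range Φ) :=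
    Module.finite_def.mpr (IsNoetherian.noetherian ⊤)
  obtain ⟨g, hg⟩ := exists_nonzero_hom C ((M →ₗ[R] C ⊗[R] N) ⧸ LinearMap.range Φ) hfaith
  obtain ⟨h', hh'⟩ := extLift Φ (LinearMap.range Φ).mkQ hΦinj
    (Submodule.mkQ_surjective _) (Submodule.ker_mkQ _) (h1ext 1 le_rfl) g
  obtain ⟨ψ, hψ⟩ := hsurj h'
  apply hg
  rw [← hh', ← hψ]
  apply LinearMap.ext; intro c
  simp only [LinearMap.comp_apply]
  exact (Submodule.Quotient.mk_eq_zero _).2 ⟨ψ c, rfl⟩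

end MainTheorem
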